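/- Let a, b be positive integers. Rowmotion on antichains of [a]×[b] satisfies Φ_A^{a+b} = id: applying Φ_A a+b times to any antichain of [a]×[b] returns that antichain. In particular, the size of every Φ_A-orbit divides a+b. -/

import Mathlib

open scoped Classical in
/-- Rowmotion on antichains of a finite poset: `A` maps to the set of minimal
elements of the complement of the order ideal generated by `A`. -/
noncomputable def rowmotionA {P : Type*} [PartialOrder P] [Fintype P]
    (A : Finset P) : Finset P :=
  Finset.univ.filter (fun y =>
    ¬ (∃ p ∈ A, y ≤ p) ∧ ∀ z, ¬ (∃ p ∈ A, z ≤ p) → z ≤ y → z = y)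

open scoped Classical

namespace RowAux

variable {a b : ℕ}

/-- the down-set predicate -/
def D (A : Finset (Fin a × Fin b)) (p : Fin a × Fin b) : Prop := ∃ q ∈ A, p ≤ q

def RowP (A : Finset (Fin a × Fin b)) (n : ℕ) : Prop := ∃ p ∈ A, (p.1 : ℕ) = n
def ColP (A : Finset (Fin a × Fin b)) (m : ℕ) : Prop := ∃ p ∈ A, (p.2 : ℕ) = m

lemma mem_rm {A : Finset (Fin a × Fin b)} {p : Fin a × Fin b} :
    p ∈ rowmotionA A ↔ ¬ D A p ∧ ∀ z, ¬ D A z → z ≤ p → z = p := by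
  simp [rowmotionA, D]

lemma rm_antichain (A : Finset (Fin a × Fin b)) :
    IsAntichain (· ≤ ·) (↑(rowmotionA A) : Set (Fin a × Fin b)) := by
  intro u hu v hv hne hle
  rw [Finset.mem_coe, mem_rm] at hu hv
  exact hne (hv.2 u hu.1 hle)

end RowAux

namespace RowAux2
open RowAux

variable {a b : ℕ}

lemma D_mono {A : Finset (Fin a × Fin b)} {p q : Fin a × Fin b} (h : p ≤ q) (hq : D A q) :
    D A p := by
  obtain ⟨r, hr, hqr⟩ := hq
  exact ⟨r, hr, le_trans h hqr⟩

lemma mem_rm_iff {A : Finset (Fin a × Fin b)} {x : Fin a} {y : Fin b} :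
    (x, y) ∈ rowmotionA A ↔ ¬ D A (x, y) ∧
      (∀ _ : 0 < (x : ℕ), D A (⟨(x : ℕ) - 1, lt_of_le_of_lt (Nat.sub_le _ _) x.isLt⟩, y)) ∧
      (∀ _ : 0 < (y : ℕ), D A (x, ⟨(y : ℕ) - 1, lt_of_le_of_lt (Nat.sub_le _ _) y.isLt⟩)) := by
  rw [mem_rm]
  constructor
  · rintro ⟨hnD, hmin⟩
    refine ⟨hnD, ?_, ?_⟩
    · intro hx
      by_contra hD
      have := hmin _ hD ⟨by simp [Fin.le_def], le_refl y⟩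
      have : ((x : ℕ) - 1) = (x : ℕ) := congrArg (fun p => ((Prod.fst p : Fin a) : ℕ)) this
      omega
    · intro hy
      by_contra hD
      have := hmin _ hD ⟨le_refl x, by simp [Fin.le_def]⟩
      have : ((y : ℕ) - 1) = (y : ℕ) := congrArg (fun p => ((Prod.snd p : Fin b) : ℕ)) this
      omega
  · rintro ⟨hnD, h1, h2⟩
    refine ⟨hnD, ?_⟩
    rintro ⟨zx, zy⟩ hz hle
    obtain ⟨hlex, hley⟩ := Prod.mk_le_mk.mp hle
    by_contra hne
    rcases lt_or_eq_of_le hlex with hx | hx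
    · have hx0 : 0 < (x : ℕ) := lt_of_le_of_lt (Nat.zero_le _) hx
      exact hz (D_mono ⟨by simp [Fin.le_def]; omega, hley⟩ (h1 hx0))
    rcases lt_or_eq_of_le hley with hy | hy
    · have hy0 : 0 < (y : ℕ) := lt_of_le_of_lt (Nat.zero_le _) hy
      exact hz (D_mono ⟨hlex, by simp [Fin.le_def]; omega⟩ (h2 hy0))
    exact hne (by rw [hx, hy])

end RowAux2

namespace RowAux3
open RowAux RowAux2

variable {a b : ℕ}

lemma exists_min_notD (A : Finset (Fin a × Fin b)) (x : Fin a) (ytop : Fin b)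
    (h : ¬ D A (x, ytop)) :
    ∃ y0 : Fin b, ¬ D A (x, y0) ∧ ∀ y : Fin b, (y : ℕ) < (y0 : ℕ) → D A (x, y) := by
  classical
  set T : Finset (Fin b) := Finset.univ.filter (fun y : Fin b => ¬ D A (x, y)) with hT
  have hTne : T.Nonempty := ⟨ytop, by simp [hT, h]⟩
  refine ⟨T.min' hTne, ?_, ?_⟩
  · have := T.min'_mem hTne
    simp [hT] at this
    exact this
  · intro y hy
    by_contra hD
    have hyT : y ∈ T := by simp [hT, hD]
    have := T.min'_le y hyT
    rw [Fin.le_def] at this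
    omega

lemma rowP_rm {A : Finset (Fin a × Fin b)}
    (hA : IsAntichain (· ≤ ·) (↑A : Set (Fin a × Fin b))) (hb : 1 ≤ b)
    {n : ℕ} (hn : n < a) :
    RowP (rowmotionA A) n ↔ if n = 0 then ¬ ColP A (b - 1) else RowP A (n - 1) := by
  split_ifs with h0
  · subst h0
    constructor
    · rintro ⟨p, hp, hp1⟩ ⟨q, hq, hq2⟩
      rw [mem_rm] at hp
      exact hp.1 ⟨q, hq, ⟨by rw [Fin.le_def]; omega, by rw [Fin.le_def]; omega⟩⟩
    · intro hc
      have hnD : ¬ D A (⟨0, by omega⟩, ⟨b - 1, by omega⟩) := by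
        rintro ⟨q, hq, -, hle2⟩
        rw [Fin.le_def] at hle2
        exact hc ⟨q, hq, by simp at hle2 ⊢; omega⟩
      obtain ⟨y0, hy0, hmin⟩ := exists_min_notD A _ _ hnD
      refine ⟨(⟨0, by omega⟩, y0), ?_, rfl⟩
      rw [mem_rm_iff]
      refine ⟨hy0, fun hx => by simp at hx, fun hy => hmin _ (by simp; omega)⟩
  · constructor
    · rintro ⟨⟨px, py⟩, hp, hp1⟩
      rw [mem_rm_iff] at hp
      have hp1' : (px : ℕ) = n := hp1
      obtain ⟨⟨q1, q2⟩, hq, hle1, hle2⟩ := hp.2.1 (by omega)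
      have hle1' : (px : ℕ) - 1 ≤ (q1 : ℕ) := hle1
      rcases Nat.lt_or_ge (q1 : ℕ) n with hq1 | hq1
      · exact ⟨(q1, q2), hq, by simp; omega⟩
      · exact absurd ⟨(q1, q2), hq, (by rw [Fin.le_def]; simp; omega : px ≤ q1), hle2⟩ hp.1
    · rintro ⟨⟨p1, p2⟩, hp, hp1⟩
      have hp1' : (p1 : ℕ) = n - 1 := hp1
      have hnD : ¬ D A (⟨n, hn⟩, ⟨b - 1, by omega⟩) := by
        rintro ⟨⟨q1, q2⟩, hq, hle1, hle2⟩
        have hle1' : n ≤ (q1 : ℕ) := hle1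
        have hle2' : b - 1 ≤ (q2 : ℕ) := hle2
        refine hA hp hq (fun he => ?_)
          ⟨(by rw [Fin.le_def]; omega : p1 ≤ q1),
           (by rw [Fin.le_def]; have := q2.isLt; have := p2.isLt; omega : p2 ≤ q2)⟩
        have : p1 = q1 := congrArg Prod.fst he
        have : (p1 : ℕ) = (q1 : ℕ) := congrArg Fin.val this
        omega
      obtain ⟨y0, hy0, hmin⟩ := exists_min_notD A _ _ hnD
      have hple : (y0 : ℕ) ≤ (p2 : ℕ) := by
        by_contra hc
        obtain ⟨⟨q1, q2⟩, hq, hle1, hle2⟩ := hmin p2 (by omega)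
        have hle1' : n ≤ (q1 : ℕ) := hle1
        have hle2' : (p2 : ℕ) ≤ (q2 : ℕ) := hle2
        refine hA hp hq (fun he => ?_)
          ⟨(by rw [Fin.le_def]; omega : p1 ≤ q1), (by rw [Fin.le_def]; omega : p2 ≤ q2)⟩
        have : p1 = q1 := congrArg Prod.fst he
        have : (p1 : ℕ) = (q1 : ℕ) := congrArg Fin.val this
        omega
      refine ⟨(⟨n, hn⟩, y0), ?_, rfl⟩
      rw [mem_rm_iff]
      refine ⟨hy0, fun hx => ⟨(p1, p2), hp, ?_, (by rw [Fin.le_def]; omega : y0 ≤ p2)⟩,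
        fun hy => hmin _ (by simp; omega)⟩
      rw [Fin.le_def]
      simp
      omega



lemma exists_min_notD' (A : Finset (Fin a × Fin b)) (y : Fin b) (xtop : Fin a)
    (h : ¬ D A (xtop, y)) :
    ∃ x0 : Fin a, ¬ D A (x0, y) ∧ ∀ x : Fin a, (x : ℕ) < (x0 : ℕ) → D A (x, y) := by
  classical
  set T : Finset (Fin a) := Finset.univ.filter (fun x : Fin a => ¬ D A (x, y)) with hT
  have hTne : T.Nonempty := ⟨xtop, by simp [hT, h]⟩
  refine ⟨T.min' hTne, ?_, ?_⟩
  · have := T.min'_mem hTne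
    simp [hT] at this
    exact this
  · intro x hx
    by_contra hD
    have hxT : x ∈ T := by simp [hT, hD]
    have := T.min'_le x hxT
    rw [Fin.le_def] at this
    omega

lemma colP_rm {A : Finset (Fin a × Fin b)}
    (hA : IsAntichain (· ≤ ·) (↑A : Set (Fin a × Fin b))) (ha : 1 ≤ a)
    {m : ℕ} (hm : m < b) :
    ColP (rowmotionA A) m ↔ if m = 0 then ¬ RowP A (a - 1) else ColP A (m - 1) := by
  split_ifs with h0
  · subst h0
    constructor
    · rintro ⟨p, hp, hp2⟩ ⟨q, hq, hq1⟩
      rw [mem_rm] at hp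
      exact hp.1 ⟨q, hq, ⟨by rw [Fin.le_def]; omega, by rw [Fin.le_def]; omega⟩⟩
    · intro hc
      have hnD : ¬ D A (⟨a - 1, by omega⟩, ⟨0, by omega⟩) := by
        rintro ⟨q, hq, hle1, -⟩
        rw [Fin.le_def] at hle1
        exact hc ⟨q, hq, by simp at hle1 ⊢; omega⟩
      obtain ⟨x0, hx0, hmin⟩ := exists_min_notD' A _ _ hnD
      refine ⟨(x0, ⟨0, by omega⟩), ?_, rfl⟩
      rw [mem_rm_iff]
      refine ⟨hx0, fun hx => hmin _ (by simp; omega), fun hy => by simp at hy⟩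
  · constructor
    · rintro ⟨⟨px, py⟩, hp, hp2⟩
      rw [mem_rm_iff] at hp
      have hp2' : (py : ℕ) = m := hp2
      obtain ⟨⟨q1, q2⟩, hq, hle1, hle2⟩ := hp.2.2 (by omega)
      have hle2' : (py : ℕ) - 1 ≤ (q2 : ℕ) := hle2
      rcases Nat.lt_or_ge (q2 : ℕ) m with hq2 | hq2
      · exact ⟨(q1, q2), hq, by simp; omega⟩
      · exact absurd ⟨(q1, q2), hq, hle1, (by rw [Fin.le_def]; simp; omega : py ≤ q2)⟩ hp.1
    · rintro ⟨⟨p1, p2⟩, hp, hp2⟩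
      have hp2' : (p2 : ℕ) = m - 1 := hp2
      have hnD : ¬ D A (⟨a - 1, by omega⟩, ⟨m, hm⟩) := by
        rintro ⟨⟨q1, q2⟩, hq, hle1, hle2⟩
        have hle1' : a - 1 ≤ (q1 : ℕ) := hle1
        have hle2' : m ≤ (q2 : ℕ) := hle2
        refine hA hp hq (fun he => ?_)
          ⟨(by rw [Fin.le_def]; have := q1.isLt; have := p1.isLt; omega : p1 ≤ q1),
           (by rw [Fin.le_def]; omega : p2 ≤ q2)⟩
        have : p2 = q2 := congrArg Prod.snd he
        have : (p2 : ℕ) = (q2 : ℕ) := congrArg Fin.val this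
        omega
      obtain ⟨x0, hx0, hmin⟩ := exists_min_notD' A _ _ hnD
      have hple : (x0 : ℕ) ≤ (p1 : ℕ) := by
        by_contra hc
        obtain ⟨⟨q1, q2⟩, hq, hle1, hle2⟩ := hmin p1 (by omega)
        have hle1' : (p1 : ℕ) ≤ (q1 : ℕ) := hle1
        have hle2' : m ≤ (q2 : ℕ) := hle2
        refine hA hp hq (fun he => ?_)
          ⟨(by rw [Fin.le_def]; omega : p1 ≤ q1), (by rw [Fin.le_def]; omega : p2 ≤ q2)⟩
        have : p2 = q2 := congrArg Prod.snd he
        have : (p2 : ℕ) = (q2 : ℕ) := congrArg Fin.val this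
        omega
      refine ⟨(x0, ⟨m, hm⟩), ?_, rfl⟩
      rw [mem_rm_iff]
      refine ⟨hx0, fun hx => hmin _ (by simp; omega),
        fun hy => ⟨(p1, p2), hp, (by rw [Fin.le_def]; omega : x0 ≤ p1), ?_⟩⟩
      rw [Fin.le_def]
      simp
      omega

end RowAux3

namespace RowAux4
open RowAux

variable {a b : ℕ}

lemma fst_injOn {A : Finset (Fin a × Fin b)}
    (hA : IsAntichain (· ≤ ·) (↑A : Set (Fin a × Fin b))) :
    Set.InjOn Prod.fst (↑A : Set (Fin a × Fin b)) := by
  intro p hp q hq he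
  by_contra hne
  rcases le_total p.2 q.2 with h | h
  · exact hA hp hq hne ⟨le_of_eq he, h⟩
  · exact hA hq hp (Ne.symm hne) ⟨le_of_eq he.symm, h⟩

lemma snd_injOn {A : Finset (Fin a × Fin b)}
    (hA : IsAntichain (· ≤ ·) (↑A : Set (Fin a × Fin b))) :
    Set.InjOn Prod.snd (↑A : Set (Fin a × Fin b)) := by
  intro p hp q hq he
  by_contra hne
  rcases le_total p.1 q.1 with h | h
  · exact hA hp hq hne ⟨h, le_of_eq he⟩
  · exact hA hq hp (Ne.symm hne) ⟨h, le_of_eq he.symm⟩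

lemma filter_eq {A : Finset (Fin a × Fin b)}
    (hA : IsAntichain (· ≤ ·) (↑A : Set (Fin a × Fin b)))
    {x : Fin a} {y : Fin b} (hxy : (x, y) ∈ A) :
    A.filter (fun p => p.1 ≤ x) = A.filter (fun p => y ≤ p.2) := by
  ext p
  simp only [Finset.mem_filter, and_congr_right_iff]
  intro hp
  by_cases hpe : p = (x, y)
  · subst hpe; simp
  constructor
  · intro h1
    have h := hA hp hxy hpe
    by_contra hc
    exact h ⟨h1, le_of_lt (not_le.mp hc)⟩
  · intro h2
    have h := hA hxy hp (fun he => hpe he.symm)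
    by_contra hc
    exact h ⟨le_of_lt (not_le.mp hc), h2⟩

lemma card_rows_filter {A : Finset (Fin a × Fin b)}
    (hA : IsAntichain (· ≤ ·) (↑A : Set (Fin a × Fin b))) (x : Fin a) :
    ((A.image Prod.fst).filter (· ≤ x)).card = (A.filter (fun p => p.1 ≤ x)).card := by
  rw [Finset.filter_image]
  exact Finset.card_image_of_injOn ((fst_injOn hA).mono (fun p hp => (Finset.mem_filter.mp hp).1))

lemma card_cols_filter {A : Finset (Fin a × Fin b)}
    (hA : IsAntichain (· ≤ ·) (↑A : Set (Fin a × Fin b))) (y : Fin b) :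
    ((A.image Prod.snd).filter (y ≤ ·)).card = (A.filter (fun p => y ≤ p.2)).card := by
  rw [Finset.filter_image]
  exact Finset.card_image_of_injOn ((snd_injOn hA).mono (fun p hp => (Finset.mem_filter.mp hp).1))

lemma count_inj_cols {C : Finset (Fin b)} {y y' : Fin b} (hy : y ∈ C) (hy' : y' ∈ C)
    (h : (C.filter (y ≤ ·)).card = (C.filter (y' ≤ ·)).card) : y = y' := by
  have key : ∀ {z z' : Fin b}, z ∈ C → z ≤ z' →
      (C.filter (z ≤ ·)).card = (C.filter (z' ≤ ·)).card → z' ≤ z := by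
    intro z z' hz hle hcard
    have hsub : C.filter (z' ≤ ·) ⊆ C.filter (z ≤ ·) := by
      intro w hw
      rw [Finset.mem_filter] at hw ⊢
      exact ⟨hw.1, le_trans hle hw.2⟩
    have := Finset.eq_of_subset_of_card_le hsub (le_of_eq hcard)
    have hzmem : z ∈ C.filter (z' ≤ ·) := by
      rw [this, Finset.mem_filter]; exact ⟨hz, le_refl z⟩
    exact (Finset.mem_filter.mp hzmem).2
  rcases le_total y y' with hle | hle
  · exact le_antisymm hle (key hy hle h)
  · exact (le_antisymm hle (key hy' hle h.symm)).symm

lemma mem_iff_cnt {A : Finset (Fin a × Fin b)}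
    (hA : IsAntichain (· ≤ ·) (↑A : Set (Fin a × Fin b))) {x : Fin a} {y : Fin b} :
    (x, y) ∈ A ↔ x ∈ A.image Prod.fst ∧ y ∈ A.image Prod.snd ∧
      ((A.image Prod.fst).filter (· ≤ x)).card = ((A.image Prod.snd).filter (y ≤ ·)).card := by
  have fwd : ∀ {x : Fin a} {y : Fin b}, (x, y) ∈ A →
      ((A.image Prod.fst).filter (· ≤ x)).card = ((A.image Prod.snd).filter (y ≤ ·)).card := by
    intro x y hxy
    rw [card_rows_filter hA, card_cols_filter hA, filter_eq hA hxy]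
  constructor
  · intro hxy
    exact ⟨Finset.mem_image_of_mem _ hxy, Finset.mem_image_of_mem _ hxy, fwd hxy⟩
  · rintro ⟨hx, hy, hcnt⟩
    obtain ⟨p, hp, hp1⟩ := Finset.mem_image.mp hx
    have hp' : (x, p.2) ∈ A := by rwa [← hp1, Prod.mk.eta]
    have h1 := fwd hp'
    have h2 : p.2 ∈ A.image Prod.snd := Finset.mem_image_of_mem _ hp
    have := count_inj_cols h2 hy (h1.symm.trans hcnt)
    rwa [← this]

lemma recovery {A B : Finset (Fin a × Fin b)}
    (hA : IsAntichain (· ≤ ·) (↑A : Set (Fin a × Fin b)))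
    (hB : IsAntichain (· ≤ ·) (↑B : Set (Fin a × Fin b)))
    (hrows : A.image Prod.fst = B.image Prod.fst)
    (hcols : A.image Prod.snd = B.image Prod.snd) : A = B := by
  ext p
  obtain ⟨x, y⟩ := p
  rw [mem_iff_cnt hA, mem_iff_cnt hB, hrows, hcols]

lemma mem_rowsF_iff {A : Finset (Fin a × Fin b)} (i : Fin a) :
    i ∈ A.image Prod.fst ↔ RowP A (i : ℕ) := by
  simp only [Finset.mem_image, RowP]
  constructor
  · rintro ⟨p, hp, rfl⟩; exact ⟨p, hp, rfl⟩
  · rintro ⟨p, hp, hv⟩; exact ⟨p, hp, Fin.ext hv⟩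

lemma mem_colsF_iff {A : Finset (Fin a × Fin b)} (j : Fin b) :
    j ∈ A.image Prod.snd ↔ ColP A (j : ℕ) := by
  simp only [Finset.mem_image, ColP]
  constructor
  · rintro ⟨p, hp, rfl⟩; exact ⟨p, hp, rfl⟩
  · rintro ⟨p, hp, hv⟩; exact ⟨p, hp, Fin.ext hv⟩

end RowAux4

namespace RowAux5
open RowAux RowAux3 RowAux4

variable {a b : ℕ}

noncomputable def SF (A : Finset (Fin a × Fin b)) : Finset (Fin (a + b)) :=
  Finset.univ.filter (fun x => if (x : ℕ) < a then RowP A (x : ℕ) else ¬ ColP A ((x : ℕ) - a))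

lemma val_sub_one {n : ℕ} [NeZero n] (hn : 2 ≤ n) (x : Fin n) :
    ((x - 1 : Fin n) : ℕ) = if (x : ℕ) = 0 then n - 1 else (x : ℕ) - 1 := by
  have h1 : ((1 : Fin n) : ℕ) = 1 := by
    rw [Fin.val_one']; exact Nat.mod_eq_of_lt hn
  have hx := x.isLt
  rw [Fin.sub_def]
  simp only [h1]
  by_cases h0 : (x : ℕ) = 0
  · rw [if_pos h0, h0, Nat.add_zero, Nat.mod_eq_of_lt (by omega)]
  · rw [if_neg h0]
    have he : n - 1 + (x : ℕ) = ((x : ℕ) - 1) + n := by omega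
    rw [he, Nat.add_mod_right, Nat.mod_eq_of_lt (by omega)]

lemma mem_image_add_one {n : ℕ} [NeZero n] {T : Finset (Fin n)} {x : Fin n} :
    x ∈ T.image (· + 1) ↔ x - 1 ∈ T := by
  rw [Finset.mem_image]
  constructor
  · rintro ⟨y, hy, rfl⟩
    simpa using hy
  · intro h
    exact ⟨x - 1, h, by abel⟩

lemma SF_rm [NeZero (a + b)] {A : Finset (Fin a × Fin b)}
    (hA : IsAntichain (· ≤ ·) (↑A : Set (Fin a × Fin b))) (ha : 1 ≤ a) (hb : 1 ≤ b) :
    SF (rowmotionA A) = (SF A).image (· + 1) := by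
  ext x
  rw [mem_image_add_one]
  have hu := val_sub_one (n := a + b) (by omega) x
  have hx := x.isLt
  simp only [SF, Finset.mem_filter, Finset.mem_univ, true_and]
  by_cases h0 : (x : ℕ) = 0
  · rw [if_pos h0] at hu
    rw [if_pos (show (x : ℕ) < a by omega), if_neg (show ¬ ((x - 1 : Fin (a+b)) : ℕ) < a by omega),
      h0, hu, rowP_rm hA hb (show (0 : ℕ) < a by omega), if_pos rfl,
      show a + b - 1 - a = b - 1 by omega]
  · rw [if_neg h0] at hu
    by_cases hlt : (x : ℕ) < a
    · rw [if_pos hlt, if_pos (show ((x - 1 : Fin (a+b)) : ℕ) < a by omega), hu,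
        rowP_rm hA hb hlt, if_neg h0]
    · by_cases hea : (x : ℕ) = a
      · rw [if_neg hlt, if_pos (show ((x - 1 : Fin (a+b)) : ℕ) < a by omega), hu, hea,
          Nat.sub_self, colP_rm hA ha (show (0 : ℕ) < b by omega), if_pos rfl, not_not,
          show (a : ℕ) - 1 = a - 1 by omega]
      · rw [if_neg hlt, if_neg (show ¬ ((x - 1 : Fin (a+b)) : ℕ) < a by omega), hu,
          colP_rm hA ha (show (x : ℕ) - a < b by omega),
          if_neg (show ¬ (x : ℕ) - a = 0 by omega),
          show (x : ℕ) - 1 - a = (x : ℕ) - a - 1 by omega]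

end RowAux5

namespace RowAux6
open RowAux RowAux3 RowAux4 RowAux5
open Fin.NatCast

variable {a b : ℕ}

lemma iter_antichain {A : Finset (Fin a × Fin b)}
    (hA : IsAntichain (· ≤ ·) (↑A : Set (Fin a × Fin b))) (k : ℕ) :
    IsAntichain (· ≤ ·) (↑(rowmotionA^[k] A) : Set (Fin a × Fin b)) := by
  cases k with
  | zero => exact hA
  | succ k => rw [Function.iterate_succ_apply']; exact rm_antichain _

lemma SF_iter [NeZero (a + b)] {A : Finset (Fin a × Fin b)}
    (hA : IsAntichain (· ≤ ·) (↑A : Set (Fin a × Fin b))) (ha : 1 ≤ a) (hb : 1 ≤ b) (k : ℕ) :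
    SF (rowmotionA^[k] A) = (SF A).image (fun y => y + (k : Fin (a + b))) := by
  induction k with
  | zero => simp
  | succ k ih =>
    rw [Function.iterate_succ_apply', SF_rm (iter_antichain hA k) ha hb, ih,
      Finset.image_image]
    have he : ((fun y : Fin (a + b) => y + 1) ∘ (fun y => y + (k : Fin (a + b)))) =
        fun y => y + ((k + 1 : ℕ) : Fin (a + b)) := by
      funext y
      simp [Function.comp, add_assoc]
    rw [he]

lemma main1 {A : Finset (Fin a × Fin b)} (ha : 1 ≤ a) (hb : 1 ≤ b)
    (hA : IsAntichain (· ≤ ·) (↑A : Set (Fin a × Fin b))) :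
    rowmotionA^[a + b] A = A := by
  haveI : NeZero (a + b) := ⟨by omega⟩
  have hS : SF (rowmotionA^[a + b] A) = SF A := by
    rw [SF_iter hA ha hb, Fin.natCast_self]
    simp
  have hrow : ∀ n, n < a → (RowP (rowmotionA^[a + b] A) n ↔ RowP A n) := by
    intro n hn
    have := Finset.ext_iff.mp hS ⟨n, by omega⟩
    simpa [SF, Finset.mem_filter, hn] using this
  have hcol : ∀ m, m < b → (ColP (rowmotionA^[a + b] A) m ↔ ColP A m) := by
    intro m hm
    have := Finset.ext_iff.mp hS ⟨a + m, by omega⟩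
    simp only [SF, Finset.mem_filter, Finset.mem_univ, true_and] at this
    rw [if_neg (by simp), if_neg (by simp)] at this
    simpa using not_iff_not.mp this
  refine recovery (iter_antichain hA _) hA ?_ ?_
  · ext i
    rw [mem_rowsF_iff, mem_rowsF_iff, hrow _ i.isLt]
  · ext j
    rw [mem_colsF_iff, mem_colsF_iff, hcol _ j.isLt]

end RowAux6

theorem antichain_rowmotion_order_divides
    (a b : ℕ) (ha : 1 ≤ a) (hb : 1 ≤ b) :
    (∀ A : Finset (Fin a × Fin b), IsAntichain (· ≤ ·) (↑A : Set (Fin a × Fin b)) →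
      rowmotionA^[a + b] A = A) ∧
    (∀ O : Finset (Finset (Fin a × Fin b)),
      (∃ A : Finset (Fin a × Fin b), IsAntichain (· ≤ ·) (↑A : Set (Fin a × Fin b)) ∧
        ∀ B, B ∈ O ↔ ∃ k : ℕ, rowmotionA^[k] A = B) →
      O.card ∣ (a + b)) := by
  constructor
  · intro A hA
    exact RowAux6.main1 ha hb hA
  · rintro O ⟨A, hA, hO⟩
    set f : Finset (Fin a × Fin b) → Finset (Fin a × Fin b) := rowmotionA with hf
    have hper : Function.IsPeriodicPt f (a + b) A := RowAux6.main1 ha hb hA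
    have hpos : 0 < Function.minimalPeriod f A :=
      hper.minimalPeriod_pos (by omega)
    have hdvd : Function.minimalPeriod f A ∣ (a + b) :=
      Function.isPeriodicPt_iff_minimalPeriod_dvd.mp hper
    set m := Function.minimalPeriod f A with hm
    have hOe : O = (Finset.range m).image (fun k => f^[k] A) := by
      ext B
      rw [hO B, Finset.mem_image]
      constructor
      · rintro ⟨k, rfl⟩
        exact ⟨k % m, Finset.mem_range.mpr (Nat.mod_lt _ hpos),
          Function.iterate_mod_minimalPeriod_eq⟩
      · rintro ⟨k, -, rfl⟩
        exact ⟨k, rfl⟩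
    rw [hOe, Finset.card_image_of_injOn, Finset.card_range]
    · exact hdvd
    · intro i hi j hj hij
      exact Function.iterate_injOn_Iio_minimalPeriod
        (Set.mem_Iio.mpr (Finset.mem_range.mp hi))
        (Set.mem_Iio.mpr (Finset.mem_range.mp hj)) hij
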